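/- Let G and H be nontrivial graphs. If G belongs to the class 𝒢 (or symmetrically H does), then edim(G ∨ H) = |V(G)| + |V(H)| - 1. -/

import Mathlib

open SimpleGraph

variable {V W : Type*}

/-- Distance (in `ℕ∞`) from a vertex to an edge: the minimum of the distances
to the two endpoints. -/
noncomputable def edgeDist (G : SimpleGraph V) (v : V) (e : Sym2 V) : ℕ∞ :=
  Sym2.lift ⟨fun a b => min (G.edist v a) (G.edist v b),
    fun a b => min_comm _ _⟩ e

/-- A set of vertices is an edge metric generator if every pair of distinct
edges is distinguished by some vertex of the set. -/
def IsEdgeMetricGenerator (G : SimpleGraph V) (S : Set V) : Prop :=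
  ∀ e₁ ∈ G.edgeSet, ∀ e₂ ∈ G.edgeSet, e₁ ≠ e₂ →
    ∃ w ∈ S, edgeDist G w e₁ ≠ edgeDist G w e₂

/-- The edge metric dimension: minimum cardinality of an edge metric generator. -/
noncomputable def edim (G : SimpleGraph V) : ℕ :=
  sInf {n | ∃ S : Set V, S.ncard = n ∧ IsEdgeMetricGenerator G S}


/-- The join of two graphs: disjoint union plus all edges across. -/
def joinGraph (G : SimpleGraph V) (H : SimpleGraph W) : SimpleGraph (V ⊕ W) where
  Adj x y := match x, y with
    | .inl a, .inl b => G.Adj a b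
    | .inr a, .inr b => H.Adj a b
    | .inl _, .inr _ => True
    | .inr _, .inl _ => True
  symm := ⟨by rintro (a | a) (b | b) h <;> simp_all [SimpleGraph.adj_comm]⟩
  loopless := ⟨by
    rintro (a | a) h
    · exact G.loopless.irrefl a h
    · exact H.loopless.irrefl a h⟩

/-- A total dominating set: every vertex has a neighbor in the set. -/
def IsTotalDomSet (G : SimpleGraph V) (D : Set V) : Prop :=
  ∀ v : V, ∃ d ∈ D, G.Adj v d

/-- The total domination number. -/
noncomputable def totalDomNum (G : SimpleGraph V) : ℕ :=
  sInf {n | ∃ D : Set V, D.ncard = n ∧ IsTotalDomSet G D}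

/-- The class 𝒢: for every vertex `u` there is a neighbor `v`
such that `{u, v}` is a minimum total dominating set. -/
def InClassG (G : SimpleGraph V) : Prop :=
  ∀ u : V, ∃ v : V, G.Adj u v ∧ IsTotalDomSet G {u, v} ∧
    ({u, v} : Set V).ncard = totalDomNum G

/-- Lexicographic product `G[H]`. -/
def lexProd (G : SimpleGraph V) (H : SimpleGraph W) : SimpleGraph (V × W) where
  Adj x y := G.Adj x.1 y.1 ∨ (x.1 = y.1 ∧ H.Adj x.2 y.2)
  symm := ⟨by rintro ⟨g, h⟩ ⟨g', h'⟩ (hadj | ⟨rfl, hadj⟩)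
              · exact Or.inl hadj.symm
              · exact Or.inr ⟨rfl, hadj.symm⟩⟩
  loopless := ⟨by rintro ⟨g, h⟩ (hadj | ⟨-, hadj⟩)
                  · exact G.loopless.irrefl g hadj
                  · exact H.loopless.irrefl h hadj⟩

/-- Corona product `G ⊙ H`: vertex `(g, none)` is the vertex `g` of `G`, and
`(g, some h)` is the vertex `h` of the copy of `H` attached to `g`. -/
def corona (G : SimpleGraph V) (H : SimpleGraph W) : SimpleGraph (V × Option W) where
  Adj x y := match x, y with
    | (g, none), (g', none) => G.Adj g g'
    | (g, none), (g', some _) => g = g'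
    | (g, some _), (g', none) => g = g'
    | (g, some h), (g', some h') => g = g' ∧ H.Adj h h'
  symm := ⟨by rintro ⟨g, (_ | h)⟩ ⟨g', (_ | h')⟩ hadj <;>
             simp_all [SimpleGraph.adj_comm, eq_comm]⟩
  loopless := ⟨by rintro ⟨g, (_ | h)⟩ hadj <;> simp_all⟩

/-- The closed neighborhood of a vertex. -/
def closedNbhd (G : SimpleGraph V) (u : V) : Set V :=
  insert u (G.neighborSet u)

/-- `u` and `v` are false twins: equal open neighborhoods. -/
def FalseTwin (G : SimpleGraph V) (u v : V) : Prop :=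
  G.neighborSet u = G.neighborSet v

/-- `u` and `v` are true twins: equal closed neighborhoods. -/
def TrueTwin (G : SimpleGraph V) (u v : V) : Prop :=
  closedNbhd G u = closedNbhd G v

/-- The union of the closed neighborhoods of the two endpoints of an edge. -/
def edgeNbhd (G : SimpleGraph V) : Sym2 V → Set V :=
  Sym2.lift ⟨fun a b => closedNbhd G a ∪ closedNbhd G b, fun _ _ => Set.union_comm _ _⟩

/-- Two edges are twin edges: `N[u] ∪ N[v] = N[x] ∪ N[y]`. -/
def TwinEdges (G : SimpleGraph V) (e f : Sym2 V) : Prop :=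
  edgeNbhd G e = edgeNbhd G f

/-- The set of edges lying in nontrivial edge-twin classes. -/
def nontrivTwinEdges (G : SimpleGraph V) : Set (Sym2 V) :=
  {e ∈ G.edgeSet | ∃ f ∈ G.edgeSet, f ≠ e ∧ TwinEdges G e f}

/-- `q(G)`: the number of edges lying in nontrivial edge-twin classes. -/
noncomputable def qval (G : SimpleGraph V) : ℕ := (nontrivTwinEdges G).ncard

/-- `q'(G) = q(G) - m`, where `m` is the number of nontrivial edge-twin classes. -/
noncomputable def q'val (G : SimpleGraph V) : ℕ :=
  qval G - (edgeNbhd G '' nontrivTwinEdges G).ncard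

/-- The set of vertices lying in nontrivial false-twin classes. -/
def nontrivFalseTwins (G : SimpleGraph V) : Set V :=
  {v | ∃ u, u ≠ v ∧ FalseTwin G u v}

/-- The set of vertices lying in nontrivial true-twin classes. -/
def nontrivTrueTwins (G : SimpleGraph V) : Set V :=
  {v | ∃ u, u ≠ v ∧ TrueTwin G u v}

/-- `f'(G) = f(G) - k`: vertices in nontrivial false-twin classes minus the
number of such classes. -/
noncomputable def f'val (G : SimpleGraph V) : ℕ :=
  (nontrivFalseTwins G).ncard - (G.neighborSet '' nontrivFalseTwins G).ncard

/-- `t'(G) = t(G) - ℓ`: vertices in nontrivial true-twin classes minus the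
number of such classes. -/
noncomputable def t'val (G : SimpleGraph V) : ℕ :=
  (nontrivTrueTwins G).ncard - (closedNbhd G '' nontrivTrueTwins G).ncard

/-- A set of representatives for the twin deletion operation: it contains
exactly one vertex from each (false- or true-) twin equivalence class. -/
def IsTwinDeletionSet (G : SimpleGraph V) (R : Set V) : Prop :=
  ∀ v : V, ∃! r : V, r ∈ R ∧ (FalseTwin G v r ∨ TrueTwin G v r)


section EdimJoinHelpers

private lemma edgeDist_mk' (G : SimpleGraph V) (w x y : V) :
    edgeDist G w s(x, y) = min (G.edist w x) (G.edist w y) := rfl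

private lemma edgeDist_eq_zero_iff' (G : SimpleGraph V) (w x y : V) :
    edgeDist G w s(x, y) = 0 ↔ w = x ∨ w = y := by
  rw [edgeDist_mk', ← bot_eq_zero, min_eq_bot, bot_eq_zero]
  simp [SimpleGraph.edist_eq_zero_iff]

private lemma edgeDist_eq_one' (G : SimpleGraph V) (w x y : V)
    (hx : w ≠ x) (hy : w ≠ y) (h : G.Adj w x ∨ G.Adj w y) :
    edgeDist G w s(x, y) = 1 := by
  rw [edgeDist_mk']
  have h1 : 1 ≤ G.edist w x := ENat.one_le_iff_ne_zero.mpr (SimpleGraph.edist_eq_zero_iff.ne.mpr hx)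
  have h2 : 1 ≤ G.edist w y := ENat.one_le_iff_ne_zero.mpr (SimpleGraph.edist_eq_zero_iff.ne.mpr hy)
  rcases h with h | h
  · rw [SimpleGraph.edist_eq_one_iff_adj.mpr h, min_eq_left h2]
  · rw [SimpleGraph.edist_eq_one_iff_adj.mpr h, min_eq_right h1]

private lemma edgeDist_ne_of_xor {U : Type*} (J : SimpleGraph U) (w x y p q : U)
    (h : ((w = x ∨ w = y) ∧ ¬(w = p ∨ w = q)) ∨ ((w = p ∨ w = q) ∧ ¬(w = x ∨ w = y))) :
    edgeDist J w s(x, y) ≠ edgeDist J w s(p, q) := by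
  rcases h with ⟨h1, h2⟩ | ⟨h1, h2⟩
  · rw [(edgeDist_eq_zero_iff' J w x y).mpr h1]
    exact fun hc => h2 ((edgeDist_eq_zero_iff' J w p q).mp hc.symm)
  · rw [(edgeDist_eq_zero_iff' J w p q).mpr h1]
    exact fun hc => h2 ((edgeDist_eq_zero_iff' J w x y).mp hc)

/-- The complement of any single vertex is always an edge metric generator. -/
private lemma gen_compl_singleton {U : Type*} (J : SimpleGraph U) (u : U) :
    IsEdgeMetricGenerator J (Set.univ \ {u}) := by
  intro e₁ he₁ e₂ he₂ hne
  revert he₁ he₂ hne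
  refine Sym2.inductionOn₂ e₁ e₂ ?_
  intro x y p q hxy hpq hne
  rw [SimpleGraph.mem_edgeSet] at hxy hpq
  have hxyne : x ≠ y := hxy.ne
  have hpqne : p ≠ q := hpq.ne
  simp only [ne_eq, Sym2.eq_iff] at hne
  have key : ∃ w, w ≠ u ∧
      (((w = x ∨ w = y) ∧ ¬(w = p ∨ w = q)) ∨ ((w = p ∨ w = q) ∧ ¬(w = x ∨ w = y))) := by
    by_cases hx : x = p ∨ x = q
    · by_cases hy : y = p ∨ y = q
      · exfalso
        rcases hx with rfl | rfl <;> rcases hy with rfl | rfl <;> simp_all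
      · push_neg at hy
        by_cases hyu : y = u
        · rcases hx with rfl | rfl
          · exact ⟨q, fun h => hy.2 (hyu.trans h.symm),
              Or.inr ⟨Or.inr rfl, by rintro (rfl | rfl) <;> simp_all⟩⟩
          · exact ⟨p, fun h => hy.1 (hyu.trans h.symm),
              Or.inr ⟨Or.inl rfl, by rintro (rfl | rfl) <;> simp_all⟩⟩
        · exact ⟨y, hyu, Or.inl ⟨Or.inr rfl, by rintro (rfl | rfl) <;> simp_all⟩⟩
    · push_neg at hx
      by_cases hy : y = p ∨ y = q
      · by_cases hxu : x = u
        · rcases hy with rfl | rfl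
          · exact ⟨q, fun h => hx.2 (hxu.trans h.symm),
              Or.inr ⟨Or.inr rfl, by rintro (rfl | rfl) <;> simp_all⟩⟩
          · exact ⟨p, fun h => hx.1 (hxu.trans h.symm),
              Or.inr ⟨Or.inl rfl, by rintro (rfl | rfl) <;> simp_all⟩⟩
        · exact ⟨x, hxu, Or.inl ⟨Or.inl rfl, by rintro (rfl | rfl) <;> simp_all⟩⟩
      · push_neg at hy
        by_cases hxu : x = u
        · exact ⟨y, fun h => hxyne (hxu.trans h.symm),
            Or.inl ⟨Or.inr rfl, by rintro (rfl | rfl) <;> simp_all⟩⟩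
        · exact ⟨x, hxu, Or.inl ⟨Or.inl rfl, by rintro (rfl | rfl) <;> simp_all⟩⟩
  obtain ⟨w, hwu, hw⟩ := key
  exact ⟨w, ⟨Set.mem_univ w, hwu⟩, edgeDist_ne_of_xor J w x y p q hw⟩

/-- Two missed vertices on the `V` side: an undistinguished pair of edges. -/
private lemma pair_same_left (G : SimpleGraph V) (H : SimpleGraph W) (a b : V)
    (hab : a ≠ b) (h : W) :
    ∃ e₁ ∈ (joinGraph G H).edgeSet, ∃ e₂ ∈ (joinGraph G H).edgeSet, e₁ ≠ e₂ ∧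
      ∀ w : V ⊕ W, w ≠ Sum.inl a → w ≠ Sum.inl b →
        edgeDist (joinGraph G H) w e₁ = edgeDist (joinGraph G H) w e₂ := by
  refine ⟨s(Sum.inl a, Sum.inr h), trivial, s(Sum.inl b, Sum.inr h), trivial, ?_, ?_⟩
  · simp [Sym2.eq_iff, hab]
  · rintro (c | d) hw1 hw2
    · rw [edgeDist_eq_one' _ _ _ _ hw1 (by simp) (Or.inr trivial),
          edgeDist_eq_one' _ _ _ _ hw2 (by simp) (Or.inr trivial)]
    · by_cases hdh : d = h
      · subst hdh
        rw [edgeDist_mk', edgeDist_mk', SimpleGraph.edist_self,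
            min_eq_right zero_le, min_eq_right zero_le]
      · have hne : (Sum.inr d : V ⊕ W) ≠ Sum.inr h := by simp [hdh]
        rw [edgeDist_eq_one' _ _ _ _ (by simp) hne (Or.inl trivial),
            edgeDist_eq_one' _ _ _ _ (by simp) hne (Or.inl trivial)]

/-- Two missed vertices on the `W` side. -/
private lemma pair_same_right (G : SimpleGraph V) (H : SimpleGraph W) (a b : W)
    (hab : a ≠ b) (g : V) :
    ∃ e₁ ∈ (joinGraph G H).edgeSet, ∃ e₂ ∈ (joinGraph G H).edgeSet, e₁ ≠ e₂ ∧
      ∀ w : V ⊕ W, w ≠ Sum.inr a → w ≠ Sum.inr b →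
        edgeDist (joinGraph G H) w e₁ = edgeDist (joinGraph G H) w e₂ := by
  refine ⟨s(Sum.inr a, Sum.inl g), trivial, s(Sum.inr b, Sum.inl g), trivial, ?_, ?_⟩
  · simp [Sym2.eq_iff, hab]
  · rintro (c | d) hw1 hw2
    · by_cases hcg : c = g
      · subst hcg
        rw [edgeDist_mk', edgeDist_mk', SimpleGraph.edist_self,
            min_eq_right zero_le, min_eq_right zero_le]
      · have hne : (Sum.inl c : V ⊕ W) ≠ Sum.inl g := by simp [hcg]
        rw [edgeDist_eq_one' _ _ _ _ (by simp) hne (Or.inl trivial),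
            edgeDist_eq_one' _ _ _ _ (by simp) hne (Or.inl trivial)]
    · rw [edgeDist_eq_one' _ _ _ _ hw1 (by simp) (Or.inr trivial),
          edgeDist_eq_one' _ _ _ _ hw2 (by simp) (Or.inr trivial)]

/-- Missed vertices on both sides, using that `G` is in the class 𝒢. -/
private lemma pair_cross_G (G : SimpleGraph V) (H : SimpleGraph W) (hc : InClassG G)
    (a : V) (b : W) :
    ∃ e₁ ∈ (joinGraph G H).edgeSet, ∃ e₂ ∈ (joinGraph G H).edgeSet, e₁ ≠ e₂ ∧
      ∀ w : V ⊕ W, w ≠ Sum.inl a → w ≠ Sum.inr b →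
        edgeDist (joinGraph G H) w e₁ = edgeDist (joinGraph G H) w e₂ := by
  obtain ⟨v, hav, hdom, -⟩ := hc a
  refine ⟨s(Sum.inl a, Sum.inl v), hav, s(Sum.inr b, Sum.inl v), trivial, ?_, ?_⟩
  · simp [Sym2.eq_iff]
  · rintro (c | d) hw1 hw2
    · by_cases hcv : c = v
      · subst hcv
        rw [edgeDist_mk', edgeDist_mk', SimpleGraph.edist_self,
            min_eq_right zero_le, min_eq_right zero_le]
      · have hcvne : (Sum.inl c : V ⊕ W) ≠ Sum.inl v := by simp [hcv]
        obtain ⟨d, hd, hadj⟩ := hdom c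
        have hadj' : (joinGraph G H).Adj (Sum.inl c) (Sum.inl a) ∨
            (joinGraph G H).Adj (Sum.inl c) (Sum.inl v) := by
          simp only [Set.mem_insert_iff, Set.mem_singleton_iff] at hd
          rcases hd with rfl | rfl
          · exact Or.inl hadj
          · exact Or.inr hadj
        rw [edgeDist_eq_one' _ _ _ _ hw1 hcvne hadj',
            edgeDist_eq_one' _ _ _ _ (by simp) hcvne (Or.inl trivial)]
    · rw [edgeDist_eq_one' _ _ _ _ (by simp) (by simp) (Or.inl trivial),
          edgeDist_eq_one' _ _ _ _ hw2 (by simp) (Or.inr trivial)]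

/-- Missed vertices on both sides, using that `H` is in the class 𝒢. -/
private lemma pair_cross_H (G : SimpleGraph V) (H : SimpleGraph W) (hc : InClassG H)
    (a : V) (b : W) :
    ∃ e₁ ∈ (joinGraph G H).edgeSet, ∃ e₂ ∈ (joinGraph G H).edgeSet, e₁ ≠ e₂ ∧
      ∀ w : V ⊕ W, w ≠ Sum.inl a → w ≠ Sum.inr b →
        edgeDist (joinGraph G H) w e₁ = edgeDist (joinGraph G H) w e₂ := by
  obtain ⟨v, hbv, hdom, -⟩ := hc b
  refine ⟨s(Sum.inr b, Sum.inr v), hbv, s(Sum.inl a, Sum.inr v), trivial, ?_, ?_⟩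
  · simp [Sym2.eq_iff]
  · rintro (c | d) hw1 hw2
    · rw [edgeDist_eq_one' _ _ _ _ (by simp) (by simp) (Or.inl trivial),
          edgeDist_eq_one' _ _ _ _ hw1 (by simp) (Or.inr trivial)]
    · by_cases hdv : d = v
      · subst hdv
        rw [edgeDist_mk', edgeDist_mk', SimpleGraph.edist_self,
            min_eq_right zero_le, min_eq_right zero_le]
      · have hdvne : (Sum.inr d : V ⊕ W) ≠ Sum.inr v := by simp [hdv]
        obtain ⟨e, he, hadj⟩ := hdom d
        have hadj' : (joinGraph G H).Adj (Sum.inr d) (Sum.inr b) ∨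
            (joinGraph G H).Adj (Sum.inr d) (Sum.inr v) := by
          simp only [Set.mem_insert_iff, Set.mem_singleton_iff] at he
          rcases he with rfl | rfl
          · exact Or.inl hadj
          · exact Or.inr hadj
        rw [edgeDist_eq_one' _ _ _ _ hw2 hdvne hadj',
            edgeDist_eq_one' _ _ _ _ (by simp) hdvne (Or.inl trivial)]

end EdimJoinHelpers



theorem edim_join_of_classG {V W : Type*} [Fintype V] [Fintype W]
    (G : SimpleGraph V) (H : SimpleGraph W)
    (hG : 2 ≤ Fintype.card V) (hH : 2 ≤ Fintype.card W)
    (hclass : InClassG G ∨ InClassG H) :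
    edim (joinGraph G H) = Fintype.card V + Fintype.card W - 1 := by
  haveI : Nonempty V := Fintype.card_pos_iff.mp (by omega)
  haveI : Nonempty W := Fintype.card_pos_iff.mp (by omega)
  obtain ⟨a₀⟩ := ‹Nonempty V›
  have hmem : Fintype.card V + Fintype.card W - 1 ∈
      {n | ∃ S : Set (V ⊕ W), S.ncard = n ∧ IsEdgeMetricGenerator (joinGraph G H) S} := by
    refine ⟨Set.univ \ {Sum.inl a₀}, ?_, gen_compl_singleton _ _⟩
    rw [Set.ncard_diff_singleton_of_mem (Set.mem_univ _), Set.ncard_univ,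
        Nat.card_eq_fintype_card, Fintype.card_sum]
  refine le_antisymm (Nat.sInf_le hmem) (le_csInf ⟨_, hmem⟩ ?_)
  rintro k ⟨S, rfl, hSg⟩
  by_contra hlt
  push_neg at hlt
  have hcompl : S.ncard + Sᶜ.ncard = Fintype.card V + Fintype.card W := by
    rw [Set.ncard_add_ncard_compl, Nat.card_eq_fintype_card, Fintype.card_sum]
  have h2 : 1 < Sᶜ.ncard := by omega
  obtain ⟨a, b, ha, hb, hab⟩ := (Set.one_lt_ncard_iff (Set.toFinite _)).mp h2
  have key : ∃ e₁ ∈ (joinGraph G H).edgeSet, ∃ e₂ ∈ (joinGraph G H).edgeSet, e₁ ≠ e₂ ∧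
      ∀ w : V ⊕ W, w ≠ a → w ≠ b →
        edgeDist (joinGraph G H) w e₁ = edgeDist (joinGraph G H) w e₂ := by
    rcases a with a | a <;> rcases b with b | b
    · exact pair_same_left G H a b (by simpa using hab) (Classical.arbitrary W)
    · rcases hclass with hc | hc
      · exact pair_cross_G G H hc a b
      · exact pair_cross_H G H hc a b
    · rcases hclass with hc | hc
      · obtain ⟨e₁, h1, e₂, h2', hne, hall⟩ := pair_cross_G G H hc b a
        exact ⟨e₁, h1, e₂, h2', hne, fun w hw1 hw2 => hall w hw2 hw1⟩
      · obtain ⟨e₁, h1, e₂, h2', hne, hall⟩ := pair_cross_H G H hc b a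
        exact ⟨e₁, h1, e₂, h2', hne, fun w hw1 hw2 => hall w hw2 hw1⟩
    · exact pair_same_right G H a b (by simpa using hab) (Classical.arbitrary V)
  obtain ⟨e₁, h1, e₂, h2', hne, hall⟩ := key
  obtain ⟨w, hwS, hwne⟩ := hSg e₁ h1 e₂ h2' hne
  exact hwne (hall w (fun h => ha (h ▸ hwS)) (fun h => hb (h ▸ hwS)))
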